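/- arXiv:math/0607485 — 4 statements merged into one kernel-verified Lean document; each statement's English description precedes it below -/
import Mathlib

section
/- Let u be a solution of the capillary equation on [0, a] with u(0) = u₀ > 0, u'(0) = 0 and contact angle condition sin ψ(a) = cos γ for some γ ∈ [0, π/2). Then 2(1 − sin γ)/(κ f(γ)) < u(a) − u₀ < a(1 − sin γ)/cos γ, where f(γ) = 2 cos γ/(κ a) − (a tan γ)/2 + (a/(2 cos² γ))(π/2 − γ). -/
open Real Set intervalIntegral MeasureTheory

lemma sqrt_one_add_sq_pos (x : ℝ) : 0 < Real.sqrt (1 + x^2) :=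
  Real.sqrt_pos.2 (by positivity)

lemma phi_hasDerivAt (x : ℝ) :
    HasDerivAt (fun y : ℝ => y / Real.sqrt (1 + y^2))
      (1 / ((1 + x^2) * Real.sqrt (1 + x^2))) x := by
  have hq : (0:ℝ) < 1 + x^2 := by positivity
  have hs := sqrt_one_add_sq_pos x
  have h1 : HasDerivAt (fun y : ℝ => 1 + y^2) (2*x) x := by
    simpa using ((hasDerivAt_pow 2 x).const_add 1)
  have h2 : HasDerivAt (fun y : ℝ => Real.sqrt (1 + y^2))
      (1 / (2 * Real.sqrt (1 + x^2)) * (2*x)) x :=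
    (Real.hasDerivAt_sqrt hq.ne').comp x h1
  have h3 := (hasDerivAt_id x).div h2 hs.ne'
  refine h3.congr_deriv ?_; symm
  have hss : Real.sqrt (1 + x^2) ^ 2 = 1 + x^2 := Real.sq_sqrt hq.le
  rw [hss, id_eq, one_mul]
  field_simp
  linear_combination (-1) * hss

lemma psi_hasDerivAt (x : ℝ) :
    HasDerivAt (fun y : ℝ => 1 / Real.sqrt (1 + y^2))
      (-(x / ((1 + x^2) * Real.sqrt (1 + x^2)))) x := by
  have hq : (0:ℝ) < 1 + x^2 := by positivity
  have hs := sqrt_one_add_sq_pos x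
  have h1 : HasDerivAt (fun y : ℝ => 1 + y^2) (2*x) x := by
    simpa using ((hasDerivAt_pow 2 x).const_add 1)
  have h2 : HasDerivAt (fun y : ℝ => Real.sqrt (1 + y^2))
      (1 / (2 * Real.sqrt (1 + x^2)) * (2*x)) x :=
    (Real.hasDerivAt_sqrt hq.ne').comp x h1
  have h3 := (hasDerivAt_const x (1:ℝ)).div h2 hs.ne'
  refine h3.congr_deriv ?_; symm
  have hss : Real.sqrt (1 + x^2) ^ 2 = 1 + x^2 := Real.sq_sqrt hq.le
  rw [hss]
  field_simp
  ring

lemma inv_rel (x : ℝ) :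
    (x / Real.sqrt (1 + x^2)) / Real.sqrt (1 - (x / Real.sqrt (1 + x^2))^2) = x := by
  have hq : (0:ℝ) < 1 + x^2 := by positivity
  have hs := sqrt_one_add_sq_pos x
  have hss : Real.sqrt (1 + x^2) ^ 2 = 1 + x^2 := Real.sq_sqrt hq.le
  have h1 : 1 - (x / Real.sqrt (1 + x^2))^2 = 1 / (1 + x^2) := by
    rw [div_pow, hss]; field_simp; ring
  rw [h1, one_div, Real.sqrt_inv]
  field_simp

lemma g_strict_mono {s t : ℝ} (hs : 0 ≤ s) (hst : s < t) (ht : t < 1) :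
    s / Real.sqrt (1 - s^2) < t / Real.sqrt (1 - t^2) := by
  have h1 : (0:ℝ) < 1 - t^2 := by nlinarith
  have h2 : (0:ℝ) < 1 - s^2 := by nlinarith
  have hd1 : 0 < Real.sqrt (1 - t^2) := Real.sqrt_pos.2 h1
  have hd2 : 0 < Real.sqrt (1 - s^2) := Real.sqrt_pos.2 h2
  have hle : Real.sqrt (1 - t^2) ≤ Real.sqrt (1 - s^2) :=
    Real.sqrt_le_sqrt (by nlinarith)
  calc s / Real.sqrt (1 - s^2) < t / Real.sqrt (1 - s^2) :=
        (div_lt_div_iff_of_pos_right hd2).2 hst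
    _ ≤ t / Real.sqrt (1 - t^2) :=
        div_le_div_of_nonneg_left (by linarith) hd1 hle

lemma rpow32 {x : ℝ} (hx : 0 < x) : x ^ ((3:ℝ)/2) = x * Real.sqrt x := by
  rw [show (3:ℝ)/2 = 1 + 1/2 by norm_num, Real.rpow_add hx, Real.rpow_one,
    ← Real.sqrt_eq_rpow]

lemma v_pos_of_s_pos {x : ℝ} (h : 0 < x / Real.sqrt (1 + x^2)) : 0 < x := by
  have h2 := mul_pos h (sqrt_one_add_sq_pos x)
  rwa [div_mul_cancel₀ _ (sqrt_one_add_sq_pos x).ne'] at h2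

set_option maxHeartbeats 1600000 in
/-- 2(1 − sin γ)/(κ f(γ)) < u(a) − u₀ < a(1 − sin γ)/cos γ,
where f(γ) = 2cos γ/(κa) − (a tan γ)/2 + (a/(2cos²γ))(π/2 − γ). -/
theorem stmt_16 (κ a u₀ γ : ℝ) (hκ : 0 < κ) (ha : 0 < a) (u : ℝ → ℝ)
    (hu : Differentiable ℝ u) (hu' : Differentiable ℝ (deriv u))
    (hode : ∀ r ∈ Set.Icc (0 : ℝ) a,
      deriv (deriv u) r = κ * u r * (1 + (deriv u r) ^ 2) ^ ((3 : ℝ) / 2))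
    (hu0 : u 0 = u₀) (hu₀pos : 0 < u₀) (hdu0 : deriv u 0 = 0)
    (hγ0 : 0 ≤ γ) (hγ1 : γ < Real.pi / 2)
    (hangle : deriv u a / Real.sqrt (1 + (deriv u a) ^ 2) = Real.cos γ) :
    2 * (1 - Real.sin γ) /
      (κ * (2 * Real.cos γ / (κ * a) - a * Real.tan γ / 2 +
        (a / (2 * (Real.cos γ) ^ 2)) * (Real.pi / 2 - γ))) < u a - u₀ ∧
    u a - u₀ < a * (1 - Real.sin γ) / Real.cos γ := by
  have hπ := Real.pi_pos
  set v : ℝ → ℝ := deriv u with hv_def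
  set s : ℝ → ℝ := fun t => v t / Real.sqrt (1 + v t ^ 2) with hs_def
  -- basic trig facts
  have hcos_pos : 0 < Real.cos γ := Real.cos_pos_of_mem_Ioo ⟨by linarith, hγ1⟩
  have hsin_nonneg : 0 ≤ Real.sin γ := Real.sin_nonneg_of_nonneg_of_le_pi hγ0 (by linarith)
  have hsin_lt_one : Real.sin γ < 1 := by nlinarith [Real.sin_sq_add_cos_sq γ]
  have hcos_lt_one : Real.cos γ < 1 := by
    have hw := sqrt_one_add_sq_pos (deriv u a)
    have h1 : deriv u a ≤ Real.sqrt ((deriv u a)^2) := by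
      rw [Real.sqrt_sq_eq_abs]; exact le_abs_self _
    have h2 : Real.sqrt ((deriv u a)^2) < Real.sqrt (1 + (deriv u a)^2) :=
      Real.sqrt_lt_sqrt (sq_nonneg _) (by linarith)
    rw [← hangle]
    exact (div_lt_one hw).2 (lt_of_le_of_lt h1 h2)
  have hsin_pos : 0 < Real.sin γ := by
    rcases hsin_nonneg.eq_or_lt with h | h
    · exfalso; nlinarith [Real.sin_sq_add_cos_sq γ]
    · exact h
  -- derivative of s
  have hsd : ∀ t, HasDerivAt s
      (1 / ((1 + v t ^ 2) * Real.sqrt (1 + v t ^ 2)) * deriv v t) t := by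
    intro t
    exact (phi_hasDerivAt (v t)).comp t (hu' t).hasDerivAt
  have hs_ode : ∀ t ∈ Set.Icc (0:ℝ) a, HasDerivAt s (κ * u t) t := by
    intro t ht
    have h := hsd t
    rw [hode t ht, rpow32 (by positivity)] at h
    have hq : (0:ℝ) < 1 + v t ^ 2 := by positivity
    have hss := sqrt_one_add_sq_pos (v t)
    convert h using 1
    field_simp
  have hscont : Continuous s := by
    have : Differentiable ℝ s := fun t => (hsd t).differentiableAt
    exact this.continuous
  have hs0 : s 0 = 0 := by simp [hs_def, hdu0]
  have hsa : s a = Real.cos γ := hangle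
  -- positivity of u on [0,a]
  have key : ∀ t ∈ Set.Icc (0:ℝ) a, u₀/2 < u t := by
    by_contra hcon
    push_neg at hcon
    obtain ⟨t₁, ht₁, hle₁⟩ := hcon
    set S : Set ℝ := Set.Icc 0 a ∩ u ⁻¹' (Set.Iic (u₀/2)) with hS_def
    have hSne : S.Nonempty := ⟨t₁, ht₁, hle₁⟩
    have hScl : IsClosed S := isClosed_Icc.inter (isClosed_Iic.preimage hu.continuous)
    have hbdd : BddBelow S := ⟨0, fun x hx => hx.1.1⟩
    set t₀ := sInf S with ht₀_def
    have ht₀S : t₀ ∈ S := hScl.csInf_mem hSne hbdd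
    have ht₀le : u t₀ ≤ u₀/2 := ht₀S.2
    have ht₀mem : t₀ ∈ Set.Icc (0:ℝ) a := ht₀S.1
    have ht₀pos : 0 < t₀ := by
      rcases eq_or_lt_of_le ht₀mem.1 with h | h
      · exfalso; rw [← h] at ht₀le; rw [hu0] at ht₀le; linarith
      · exact h
    have hlow : ∀ x ∈ Set.Ico (0:ℝ) t₀, u₀/2 < u x := by
      intro x hx
      by_contra hc
      push_neg at hc
      have hxS : x ∈ S := ⟨⟨hx.1, le_trans hx.2.le ht₀mem.2⟩, hc⟩
      exact absurd (csInf_le hbdd hxS) (not_le.2 hx.2)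
    have hsub : Set.Icc (0:ℝ) t₀ ⊆ Set.Icc 0 a := Set.Icc_subset_Icc le_rfl ht₀mem.2
    have hsm : StrictMonoOn s (Set.Icc 0 t₀) := by
      apply strictMonoOn_of_deriv_pos (convex_Icc _ _) hscont.continuousOn
      intro x hx
      rw [interior_Icc] at hx
      rw [(hs_ode x (hsub ⟨hx.1.le, hx.2.le⟩)).deriv]
      exact mul_pos hκ (lt_trans (by positivity) (hlow x ⟨hx.1.le, hx.2⟩))
    have hvpos : ∀ x ∈ Set.Ioo (0:ℝ) t₀, 0 < v x := by
      intro x hx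
      have hsx : 0 < s x := by
        have := hsm (Set.left_mem_Icc.2 ht₀pos.le) ⟨hx.1.le, hx.2.le⟩ hx.1
        rwa [hs0] at this
      exact v_pos_of_s_pos hsx
    have humono : StrictMonoOn u (Set.Icc 0 t₀) := by
      apply strictMonoOn_of_deriv_pos (convex_Icc _ _) hu.continuous.continuousOn
      intro x hx
      rw [interior_Icc] at hx
      exact hvpos x hx
    have : u 0 < u t₀ := humono (Set.left_mem_Icc.2 ht₀pos.le)
      (Set.right_mem_Icc.2 ht₀pos.le) ht₀pos
    rw [hu0] at this
    linarith
  have hu_pos : ∀ t ∈ Set.Icc (0:ℝ) a, 0 < u t :=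
    fun t ht => lt_trans (by positivity) (key t ht)
  -- global monotonicity
  have hsmA : StrictMonoOn s (Set.Icc 0 a) := by
    apply strictMonoOn_of_deriv_pos (convex_Icc _ _) hscont.continuousOn
    intro x hx
    rw [interior_Icc] at hx
    rw [(hs_ode x ⟨hx.1.le, hx.2.le⟩).deriv]
    exact mul_pos hκ (hu_pos x ⟨hx.1.le, hx.2.le⟩)
  have hvposA : ∀ x ∈ Set.Ioc (0:ℝ) a, 0 < v x := by
    intro x hx
    have hsx : 0 < s x := by
      have := hsmA (Set.left_mem_Icc.2 ha.le) ⟨hx.1.le, hx.2⟩ hx.1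
      rwa [hs0] at this
    exact v_pos_of_s_pos hsx
  have humonoA : StrictMonoOn u (Set.Icc 0 a) := by
    apply strictMonoOn_of_deriv_pos (convex_Icc _ _) hu.continuous.continuousOn
    intro x hx
    rw [interior_Icc] at hx
    exact hvposA x ⟨hx.1, hx.2.le⟩
  have hA_gt : u₀ < u a := by
    have := humonoA (Set.left_mem_Icc.2 ha.le) (Set.right_mem_Icc.2 ha.le) ha
    rwa [hu0] at this
  -- strict convexity and chord bound
  obtain ⟨c, hc_def⟩ : ∃ x : ℝ, x = Real.cos γ / a := ⟨_, rfl⟩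
  have hc_pos : 0 < c := by rw [hc_def]; exact div_pos hcos_pos ha
  have hca : c * a = Real.cos γ := by rw [hc_def]; field_simp
  have hconv : StrictConvexOn ℝ (Set.Icc 0 a) s := by
    apply StrictMonoOn.strictConvexOn_of_deriv (convex_Icc _ _) hscont.continuousOn
    rw [interior_Icc]
    intro x hx y hy hxy
    rw [(hs_ode x ⟨hx.1.le, hx.2.le⟩).deriv, (hs_ode y ⟨hy.1.le, hy.2.le⟩).deriv]
    exact mul_lt_mul_of_pos_left (humonoA ⟨hx.1.le, hx.2.le⟩ ⟨hy.1.le, hy.2.le⟩ hxy) hκ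
  have hchord : ∀ t ∈ Set.Ioo (0:ℝ) a, s t < c * t := by
    intro t ht
    have hp : 0 < (a - t)/a := by
      apply div_pos; linarith [ht.2]; exact ha
    have hq : 0 < t/a := div_pos ht.1 ha
    have hpq : (a - t)/a + t/a = 1 := by field_simp; ring
    have h2 := hconv.2 (Set.left_mem_Icc.2 ha.le) (Set.right_mem_Icc.2 ha.le)
      (ne_of_lt ha) hp hq hpq
    have harg : ((a - t)/a) • (0:ℝ) + (t/a) • a = t := by
      rw [smul_eq_mul, smul_eq_mul, mul_zero, zero_add, div_mul_cancel₀ _ ha.ne']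
    rw [harg] at h2
    simp only [smul_eq_mul, mul_zero, hs0, hsa, zero_add] at h2
    have : t/a * Real.cos γ = c * t := by rw [hc_def]; ring
    rwa [this] at h2
  -- pointwise bound v t < G t
  have hfpos : ∀ x ∈ Set.Icc (0:ℝ) a, 0 < 1 - (c*x)^2 := by
    intro x hx
    have h1 : 0 ≤ c * x := mul_nonneg hc_pos.le hx.1
    have h2 : c * x ≤ Real.cos γ := by
      rw [← hca]; exact mul_le_mul_of_nonneg_left hx.2 hc_pos.le
    nlinarith [Real.sin_sq_add_cos_sq γ, hsin_pos]
  have hv_eq : ∀ t, v t = s t / Real.sqrt (1 - s t ^ 2) := fun t => (inv_rel (v t)).symm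
  have hct_lt_one : ∀ t ∈ Set.Icc (0:ℝ) a, c * t < 1 := by
    intro t ht
    nlinarith [hfpos t ht, mul_nonneg hc_pos.le ht.1]
  have hv_lt : ∀ t ∈ Set.Ioo (0:ℝ) a, v t < c*t / Real.sqrt (1 - (c*t)^2) := by
    intro t ht
    have hs_nonneg : 0 ≤ s t := by
      have := hsmA (Set.left_mem_Icc.2 ha.le) ⟨ht.1.le, ht.2.le⟩ ht.1
      rw [hs0] at this; exact this.le
    rw [hv_eq t]
    exact g_strict_mono hs_nonneg (hchord t ht) (hct_lt_one t ⟨ht.1.le, ht.2.le⟩)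
  -- continuity facts
  have hvcont : Continuous v := hu'.continuous
  have hucont : Continuous u := hu.continuous
  have hGcont : ContinuousOn (fun t => c*t / Real.sqrt (1 - (c*t)^2)) (Set.uIcc 0 a) := by
    rw [Set.uIcc_of_le ha.le]
    apply ContinuousOn.div
    · exact (continuous_const.mul continuous_id).continuousOn
    · exact (Real.continuous_sqrt.comp (continuous_const.sub ((continuous_const.mul continuous_id).pow 2))).continuousOn
    · intro x hx
      exact (Real.sqrt_pos.2 (hfpos x hx)).ne'
  -- integrability
  have hIntv : IntervalIntegrable v MeasureTheory.volume 0 a := hvcont.intervalIntegrable 0 a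
  have hIntG : IntervalIntegrable (fun t => c*t / Real.sqrt (1 - (c*t)^2))
      MeasureTheory.volume 0 a := hGcont.intervalIntegrable
  have hIntG2 : IntervalIntegrable (fun t => t * (c*t / Real.sqrt (1 - (c*t)^2)))
      MeasureTheory.volume 0 a := (continuousOn_id.mul hGcont).intervalIntegrable
  have hInttv : IntervalIntegrable (fun t => t * v t) MeasureTheory.volume 0 a :=
    (continuous_id.mul hvcont).intervalIntegrable 0 a
  -- I1 : ∫ κ u = cos γ
  have hI1 : ∫ t in (0:ℝ)..a, κ * u t = Real.cos γ := by
    have h := intervalIntegral.integral_eq_sub_of_hasDerivAt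
      (f := s) (f' := fun t => κ * u t)
      (fun t ht => hs_ode t (by rwa [Set.uIcc_of_le ha.le] at ht))
      ((continuous_const.mul hucont).intervalIntegrable 0 a)
    rw [h, hsa, hs0, sub_zero]
  have hIu : κ * ∫ t in (0:ℝ)..a, u t = Real.cos γ := by
    rw [← intervalIntegral.integral_const_mul]; exact hI1
  -- energy identity
  have hE1 : ∫ t in (0:ℝ)..a, κ * (u t * v t) = κ/2 * u a^2 - κ/2 * u₀^2 := by
    have h := intervalIntegral.integral_eq_sub_of_hasDerivAt
      (f := fun x => κ/2 * u x^2) (f' := fun t => κ * (u t * v t))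
      (fun t _ => by
        have h2 := ((hu t).hasDerivAt.pow 2).const_mul (κ/2)
        refine h2.congr_deriv ?_; symm
        rw [hv_def]; ring)
      ((continuous_const.mul (hucont.mul hvcont)).intervalIntegrable 0 a)
    rw [h]
    show κ/2 * u a^2 - κ/2 * u 0^2 = _
    rw [hu0]
  have hea : 1 / Real.sqrt (1 + v a^2) = Real.sin γ := by
    have hw := sqrt_one_add_sq_pos (v a)
    have hsq : Real.sqrt (1 + v a^2)^2 = 1 + v a^2 := Real.sq_sqrt (by positivity)
    have h2 : (1 / Real.sqrt (1 + v a^2))^2 = Real.sin γ^2 := by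
      rw [Real.sin_sq, ← hangle]
      field_simp; linarith [hsq]
    have h3 : 1 / Real.sqrt (1 + v a^2) = |Real.sin γ| := by
      rw [← Real.sqrt_sq_eq_abs, ← h2, Real.sqrt_sq (by positivity)]
    rw [h3, abs_of_nonneg hsin_nonneg]
  have hE2 : ∫ t in (0:ℝ)..a, κ * (u t * v t) = 1 - Real.sin γ := by
    have hed : ∀ t ∈ Set.uIcc (0:ℝ) a,
        HasDerivAt (fun x => 1 / Real.sqrt (1 + v x^2)) (-(κ * (u t * v t))) t := by
      intro t ht
      rw [Set.uIcc_of_le ha.le] at ht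
      have h2 := (psi_hasDerivAt (v t)).comp t (hu' t).hasDerivAt
      rw [hode t ht, rpow32 (by positivity)] at h2
      have hq : (0:ℝ) < 1 + v t^2 := by positivity
      have hsq := sqrt_one_add_sq_pos (v t)
      refine h2.congr_deriv ?_; symm
      field_simp
    have h := intervalIntegral.integral_eq_sub_of_hasDerivAt hed
      (((continuous_const.mul (hucont.mul hvcont)).neg).intervalIntegrable 0 a)
    have h0 : 1 / Real.sqrt (1 + v 0^2) = 1 := by rw [hdu0]; norm_num
    rw [intervalIntegral.integral_neg] at h
    rw [hea, h0] at h
    linarith [h]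
  have henergy : κ/2 * u a^2 - κ/2 * u₀^2 = 1 - Real.sin γ := by rw [← hE1, hE2]
  -- I3 : ∫ (u + t v) = a u(a)
  have hI3 : ∫ t in (0:ℝ)..a, (u t + t * v t) = a * u a := by
    have h := intervalIntegral.integral_eq_sub_of_hasDerivAt
      (f := fun t => t * u t) (f' := fun t => u t + t * v t)
      (fun t _ => by
        have h2 := (hasDerivAt_id t).mul (hu t).hasDerivAt
        refine h2.congr_deriv ?_; symm
        rw [hv_def]; simp only [id_eq, one_mul]; try ring)
      ((hucont.add (continuous_id.mul hvcont)).intervalIntegrable 0 a)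
    rw [h]; simp
  -- I4
  have hI4 : ∫ t in (0:ℝ)..a, v t = u a - u₀ := by
    have h := intervalIntegral.integral_eq_sub_of_hasDerivAt
      (f := u) (f' := v) (fun t _ => (hu t).hasDerivAt) hIntv
    rw [h, hu0]
  -- I5
  have hsqa : Real.sqrt (1 - (c*a)^2) = Real.sin γ := by
    rw [hca, ← Real.sin_sq, Real.sqrt_sq hsin_nonneg]
  have hI5 : ∫ t in (0:ℝ)..a, c*t / Real.sqrt (1 - (c*t)^2) = (1 - Real.sin γ)/c := by
    have hd : ∀ t ∈ Set.uIcc (0:ℝ) a,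
        HasDerivAt (fun x => -Real.sqrt (1 - (c*x)^2)/c)
          (c*t / Real.sqrt (1 - (c*t)^2)) t := by
      intro t ht
      rw [Set.uIcc_of_le ha.le] at ht
      have hf := hfpos t ht
      have hsf := Real.sqrt_pos.2 hf
      have h1 : HasDerivAt (fun x : ℝ => c*x) c t := by simpa using (hasDerivAt_id t).const_mul c
      have hin : HasDerivAt (fun x : ℝ => 1 - (c*x)^2) (-(2*(c*t)*c)) t := by
        have h2 := (h1.pow 2).const_sub 1
        refine h2.congr_deriv ?_; symm
        norm_num
      have hsq := (Real.hasDerivAt_sqrt hf.ne').comp t hin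
      have h4 := (hsq.neg).div_const c
      refine h4.congr_deriv ?_; symm
      have hss : Real.sqrt (1 - (c*t)^2)^2 = 1 - (c*t)^2 := Real.sq_sqrt hf.le
      field_simp
    have h := intervalIntegral.integral_eq_sub_of_hasDerivAt hd hIntG
    rw [h]
    rw [hsqa]
    norm_num
    field_simp
    ring
  -- I6
  have harccos : Real.arcsin (Real.cos γ) = Real.pi/2 - γ := by
    rw [← Real.sin_pi_div_two_sub, Real.arcsin_sin (by linarith) (by linarith)]
  have hI6 : ∫ t in (0:ℝ)..a, t * (c*t / Real.sqrt (1 - (c*t)^2))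
      = ((Real.pi/2 - γ) - Real.cos γ * Real.sin γ)/(2*c^2) := by
    have hd : ∀ t ∈ Set.uIcc (0:ℝ) a,
        HasDerivAt (fun x => (Real.arcsin (c*x) - c*x*Real.sqrt (1 - (c*x)^2))/(2*c^2))
          (t * (c*t / Real.sqrt (1 - (c*t)^2))) t := by
      intro t ht
      rw [Set.uIcc_of_le ha.le] at ht
      have hf := hfpos t ht
      have hsf := Real.sqrt_pos.2 hf
      have hct0 : 0 ≤ c*t := mul_nonneg hc_pos.le ht.1
      have hct1 : c*t < 1 := hct_lt_one t ht
      have h1 : HasDerivAt (fun x : ℝ => c*x) c t := by simpa using (hasDerivAt_id t).const_mul c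
      have harc : HasDerivAt (fun x => Real.arcsin (c*x))
          (1 / Real.sqrt (1 - (c*t)^2) * c) t :=
        (Real.hasDerivAt_arcsin (by linarith) (ne_of_lt hct1)).comp t h1
      have hin : HasDerivAt (fun x : ℝ => 1 - (c*x)^2) (-(2*(c*t)*c)) t := by
        have h2 := (h1.pow 2).const_sub 1
        refine h2.congr_deriv ?_; symm
        norm_num
      have hsq := (Real.hasDerivAt_sqrt hf.ne').comp t hin
      have hprod := h1.mul hsq
      have h4 := ((harc.sub hprod).div_const (2*c^2))
      refine h4.congr_deriv ?_; symm
      simp only [Function.comp_apply]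
      have hss : Real.sqrt (1 - (c*t)^2)^2 = 1 - (c*t)^2 := Real.sq_sqrt hf.le
      obtain ⟨w, hw⟩ : ∃ w, w = Real.sqrt (1 - (c*t)^2) := ⟨_, rfl⟩
      rw [← hw] at hss ⊢
      have hwpos : 0 < w := hw ▸ hsf
      field_simp
      linear_combination hss
    have h := intervalIntegral.integral_eq_sub_of_hasDerivAt hd hIntG2
    rw [h, hca]
    norm_num [harccos]
    rw [← Real.sin_sq, Real.sqrt_sq hsin_nonneg]
  -- strict comparisons
  have hC1 : ∫ t in (0:ℝ)..a, v t < ∫ t in (0:ℝ)..a, c*t / Real.sqrt (1 - (c*t)^2) := by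
    have hpos := intervalIntegral_pos_of_pos_on (f := fun t => c*t / Real.sqrt (1 - (c*t)^2) - v t)
      (hIntG.sub hIntv) (fun x hx => sub_pos.2 (hv_lt x hx)) ha
    rw [intervalIntegral.integral_sub hIntG hIntv] at hpos
    linarith
  have hC2 : ∫ t in (0:ℝ)..a, t * v t
      < ∫ t in (0:ℝ)..a, t * (c*t / Real.sqrt (1 - (c*t)^2)) := by
    have hpos := intervalIntegral_pos_of_pos_on
      (f := fun t => t * (c*t / Real.sqrt (1 - (c*t)^2)) - t * v t)
      (hIntG2.sub hInttv)
      (fun x hx => by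
        have h2 := mul_pos hx.1 (sub_pos.2 (hv_lt x hx))
        rw [mul_sub] at h2
        linarith) ha
    rw [intervalIntegral.integral_sub hIntG2 hInttv] at hpos
    linarith
  have hC3 : 0 < ∫ t in (0:ℝ)..a, (a - t) * v t := by
    apply intervalIntegral_pos_of_pos_on
      (((continuous_const.sub continuous_id).mul hvcont).intervalIntegrable 0 a)
      (fun x hx => by
        exact mul_pos (by show 0 < a - x; linarith [hx.2]) (hvposA x ⟨hx.1, hx.2.le⟩)) ha
  have hsplit : ∫ t in (0:ℝ)..a, (a - t) * v t
      = a * (∫ t in (0:ℝ)..a, v t) - ∫ t in (0:ℝ)..a, t * v t := by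
    rw [← intervalIntegral.integral_const_mul,
      ← intervalIntegral.integral_sub (Continuous.intervalIntegrable (u := fun x => a * v x) (continuous_const.mul hvcont) 0 a) hInttv]
    exact intervalIntegral.integral_congr (fun t _ => by ring)
  have hI3' : (∫ t in (0:ℝ)..a, u t) + (∫ t in (0:ℝ)..a, t * v t) = a * u a := by
    rw [← intervalIntegral.integral_add (hucont.intervalIntegrable 0 a) hInttv]
    exact hI3
  -- assembly
  set X := ∫ t in (0:ℝ)..a, v t with hX_def
  clear_value X
  set Y := ∫ t in (0:ℝ)..a, t * v t with hY_def
  clear_value Y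
  set IU := ∫ t in (0:ℝ)..a, u t with hIU_def
  clear_value IU
  have hXval : X = u a - u₀ := hI4
  have hYlt : Y < ((Real.pi/2 - γ) - Real.cos γ * Real.sin γ)/(2*c^2) := by
    rw [← hI6]; exact hC2
  have hYX : Y < a * X := by rw [hsplit] at hC3; linarith
  have hXlt : X < (1 - Real.sin γ)/c := by rw [← hI5]; exact hC1
  have hIUval : IU = Real.cos γ / κ := by
    field_simp at hIu ⊢
    linarith [hIu]
  -- upper bound
  have hupper : u a - u₀ < a * (1 - Real.sin γ) / Real.cos γ := by
    have : (1 - Real.sin γ)/c = a * (1 - Real.sin γ) / Real.cos γ := by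
      rw [hc_def]; field_simp
    rw [← hXval, ← this]; exact hXlt
  -- lower bound
  have hsum_eq : a * (u a + u₀) = 2 * IU + 2 * Y - a * X := by
    have h1 : a * u₀ = a * u a - a * X := by rw [hXval]; ring
    linarith [hI3', h1]
  have hsum_lt : a * (u a + u₀) < 2 * (Real.cos γ / κ)
      + ((Real.pi/2 - γ) - Real.cos γ * Real.sin γ)/(2*c^2) := by
    rw [hsum_eq, hIUval]
    linarith [hYlt, hYX]
  set F : ℝ := 2 * Real.cos γ / (κ * a) - a * Real.tan γ / 2 +
      (a / (2 * (Real.cos γ) ^ 2)) * (Real.pi / 2 - γ) with hF_def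
  have hFeq : 2 * (Real.cos γ / κ)
      + ((Real.pi/2 - γ) - Real.cos γ * Real.sin γ)/(2*c^2) = a * F := by
    rw [hF_def, hc_def, Real.tan_eq_sin_div_cos]
    field_simp
    ring
  have hsum_ltF : u a + u₀ < F := by
    rw [hFeq] at hsum_lt
    exact (mul_lt_mul_iff_right₀ ha).1 hsum_lt
  have hsum_pos : 0 < u a + u₀ := by linarith
  have hF_pos : 0 < F := lt_trans hsum_pos hsum_ltF
  have hAmu : u a - u₀ = 2 * (1 - Real.sin γ)/(κ * (u a + u₀)) := by
    rw [eq_div_iff (by positivity)]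
    linear_combination 2 * henergy
  have hlower : 2 * (1 - Real.sin γ) / (κ * F) < u a - u₀ := by
    rw [hAmu]
    apply div_lt_div_of_pos_left (by linarith) (by positivity)
    exact mul_lt_mul_of_pos_left hsum_ltF hκ
  exact ⟨hlower, hupper⟩
end

section
/- (Graph criterion for pendent channels) Let κ < 0 and let (x, z, θ) be the solution of the system (P) on ℝ with x(0) = 0, θ(0) = 0 and z(0) = z₀ < 0. Then the directrix α = (x, z) has no vertical points, i.e. cos θ(s) > 0 for all s ∈ ℝ (so that the κ-cylindrical surface is a graph over the plane), if and only if −√(2/(−κ)) < z₀. Moreover, in this case z₀ ≤ z(s) ≤ −z₀ for all s ∈ ℝ. -/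
open Real Set

/-- Graph criterion for pendent channels: for κ < 0 and z₀ < 0,
the directrix has no vertical points (cos θ(s) > 0 for all s) if and only if
−√(2/(−κ)) < z₀; in this case z₀ ≤ z(s) ≤ −z₀ for all s. -/
theorem stmt_17 (κ : ℝ) (hκ : κ < 0) (z₀ : ℝ) (hz₀ : z₀ < 0) (x z θ : ℝ → ℝ)
    (hx : Differentiable ℝ x) (hz : Differentiable ℝ z) (hθ : Differentiable ℝ θ)
    (hode : ∀ s : ℝ, deriv x s = Real.cos (θ s) ∧ deriv z s = Real.sin (θ s) ∧
      deriv θ s = κ * z s)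
    (hx0 : x 0 = 0) (hθ0 : θ 0 = 0) (hz0 : z 0 = z₀) :
    ((∀ s : ℝ, 0 < Real.cos (θ s)) ↔ -Real.sqrt (2 / (-κ)) < z₀) ∧
    (-Real.sqrt (2 / (-κ)) < z₀ → ∀ s : ℝ, z₀ ≤ z s ∧ z s ≤ -z₀) := by
  have hz' : ∀ s, HasDerivAt z (Real.sin (θ s)) s := fun s => by
    have := (hz s).hasDerivAt; rwa [(hode s).2.1] at this
  have hθ' : ∀ s, HasDerivAt θ (κ * z s) s := fun s => by
    have := (hθ s).hasDerivAt; rwa [(hode s).2.2] at this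
  -- energy conservation
  set E : ℝ → ℝ := fun s => Real.cos (θ s) + κ * z s ^ 2 / 2 with hE
  have hE' : ∀ s, HasDerivAt E 0 s := by
    intro s
    have h1 : HasDerivAt (fun s => Real.cos (θ s)) (-Real.sin (θ s) * (κ * z s)) s :=
      (Real.hasDerivAt_cos (θ s)).comp s (hθ' s)
    have h2 : HasDerivAt (fun s => κ * z s ^ 2 / 2)
        (κ * (2 * z s ^ 1 * Real.sin (θ s)) / 2) s := by
      exact (((hz' s).pow 2).const_mul κ).div_const 2
    have := h1.add h2
    refine this.congr_deriv ?_
    ring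
  have hEconst : ∀ s, E s = 1 + κ * z₀ ^ 2 / 2 := by
    intro s
    have := is_const_of_deriv_eq_zero (f := E) (fun t => (hE' t).differentiableAt)
      (fun t => (hE' t).deriv) s 0
    simp only [hE] at this ⊢
    rw [this, hθ0, hz0, Real.cos_zero]
  have energy : ∀ s, Real.cos (θ s) = 1 + κ * z₀ ^ 2 / 2 - κ * z s ^ 2 / 2 := by
    intro s
    have := hEconst s
    simp only [hE] at this
    linarith
  -- condition translation
  have hiff : -Real.sqrt (2 / (-κ)) < z₀ ↔ 0 < 1 + κ * z₀ ^ 2 / 2 := by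
    have hκ' : (0:ℝ) < -κ := by linarith
    rw [neg_lt, show -z₀ = |z₀| by rw [abs_of_neg hz₀],
      Real.lt_sqrt (abs_nonneg z₀), sq_abs, lt_div_iff₀ hκ']
    constructor
    · intro h; nlinarith
    · intro h; nlinarith
  constructor
  · constructor
    · -- hard direction
      intro hcos
      rw [hiff]
      by_contra hle
      push_neg at hle
      -- z never vanishes
      have hzne : ∀ s, z s ≠ 0 := by
        intro s h0
        have := energy s
        rw [h0] at this
        have := hcos s
        nlinarith
      -- z < 0 everywhere
      have hzneg : ∀ s, z s < 0 := by
        intro s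
        rcases lt_or_ge (z s) 0 with h | h
        · exact h
        · exfalso
          have hpos : 0 < z s := lt_of_le_of_ne h (Ne.symm (hzne s))
          have hmem : (0:ℝ) ∈ Set.uIcc (z 0) (z s) := by
            rw [hz0]
            exact Set.mem_uIcc.2 (Or.inl ⟨le_of_lt hz₀, le_of_lt hpos⟩)
          obtain ⟨c, _, hc⟩ := intermediate_value_uIcc (hz.continuous.continuousOn
            (s := Set.uIcc 0 s)) hmem
          exact hzne c hc
      -- θ strictly monotone
      have hmono : StrictMono θ := by
        apply strictMono_of_deriv_pos
        intro t
        rw [(hode t).2.2]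
        exact mul_pos_of_neg_of_neg hκ (hzneg t)
      have hθpos : 0 < θ 1 := by
        have := hmono (show (0:ℝ) < 1 by norm_num)
        rwa [hθ0] at this
      -- θ stays below π/2
      have hθlt : ∀ s, θ s < π / 2 := by
        intro s
        by_contra hge
        push_neg at hge
        have hmem : π / 2 ∈ Set.uIcc (θ 0) (θ s) := by
          rw [hθ0]
          exact Set.mem_uIcc.2 (Or.inl ⟨by positivity, hge⟩)
        obtain ⟨c, _, hc⟩ := intermediate_value_uIcc (hθ.continuous.continuousOn
          (s := Set.uIcc 0 s)) hmem
        have := hcos c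
        rw [hc, Real.cos_pi_div_two] at this
        exact lt_irrefl _ this
      have hsin1 : 0 < Real.sin (θ 1) :=
        Real.sin_pos_of_pos_of_lt_pi hθpos (lt_trans (hθlt 1) (by linarith [Real.pi_pos]))
      -- sin θ s ≥ sin θ 1 for s ≥ 1
      have hsinle : ∀ s, 1 ≤ s → Real.sin (θ 1) ≤ Real.sin (θ s) := by
        intro s hs
        rcases eq_or_lt_of_le hs with rfl | hs'
        · exact le_rfl
        · apply le_of_lt
          apply Real.strictMonoOn_sin ⟨by linarith [Real.pi_pos], le_of_lt (hθlt 1)⟩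
            ⟨?_, le_of_lt (hθlt s)⟩ (hmono hs')
          have : θ 1 < θ s := hmono hs'
          linarith [Real.pi_pos]
      -- linear growth of z
      set g : ℝ → ℝ := fun s => z s - Real.sin (θ 1) * s with hg
      have hgmono : MonotoneOn g (Set.Ici 1) := by
        apply monotoneOn_of_deriv_nonneg (convex_Ici 1)
          ((hz.sub (differentiable_const _ |>.mul differentiable_id)).continuous.continuousOn)
          ((hz.sub (differentiable_const _ |>.mul differentiable_id)).differentiableOn)
        intro t ht
        rw [interior_Ici] at ht
        have hdg : HasDerivAt (fun y => z y - Real.sin (θ 1) * id y)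
            (Real.sin (θ t) - Real.sin (θ 1) * 1) t :=
          (hz' t).sub ((hasDerivAt_id t).const_mul (Real.sin (θ 1)))
        change 0 ≤ deriv (fun y => z y - Real.sin (θ 1) * id y) t
        rw [hdg.deriv]
        rw [mul_one]
        have := hsinle t (le_of_lt ht)
        linarith
      set S : ℝ := 1 + (1 - z 1) / Real.sin (θ 1) with hS
      have hS1 : 1 ≤ S := by
        have h9 : 0 ≤ (1 - z 1) / Real.sin (θ 1) :=
          div_nonneg (by linarith [hzneg 1]) (le_of_lt hsin1)
        rw [hS]
        linarith
      have := hgmono (Set.self_mem_Ici) (Set.mem_Ici.2 hS1) hS1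
      simp only [hg] at this
      have hzS : 1 ≤ z S := by
        have hcalc : Real.sin (θ 1) * S = Real.sin (θ 1) + (1 - z 1) := by
          rw [hS]
          field_simp
        nlinarith
      linarith [hzneg S]
    · -- easy direction
      intro h s
      have h0 : 0 < 1 + κ * z₀ ^ 2 / 2 := hiff.1 h
      rw [energy s]
      nlinarith [sq_nonneg (z s)]
  · intro h s
    have hE := energy s
    have hc1 : Real.cos (θ s) ≤ 1 := Real.cos_le_one _
    have hsq : z s ^ 2 ≤ z₀ ^ 2 := by nlinarith
    constructor
    · nlinarith [sq_nonneg (z s - z₀)]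
    · nlinarith [sq_nonneg (z s + z₀)]
end

section
/- Let κ < 0 and let u be a solution of the capillary equation with u(0) = u₀ < 0 and u'(0) = 0, defined on an interval [0, R]. Then for every r ∈ (0, R] such that u(t) < 0 for all t ∈ [0, r], the strict inequalities κ u(r) < (u'(r)/√(1 + u'(r)²))/r < κ u₀ hold; in particular sin ψ(r) < κ u₀ r where sin ψ(r) = u'(r)/√(1 + u'(r)²). -/
lemma aux_hasDerivAt (v : ℝ) :
    HasDerivAt (fun x : ℝ => x / Real.sqrt (1 + x ^ 2))
      ((Real.sqrt (1 + v ^ 2)) ^ 3)⁻¹ v := by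
  have hpos : (0:ℝ) < 1 + v ^ 2 := by positivity
  have hqpos : 0 < Real.sqrt (1 + v ^ 2) := Real.sqrt_pos.mpr hpos
  have h1 : HasDerivAt (fun x : ℝ => 1 + x ^ 2) (2 * v ^ 1) v :=
    (hasDerivAt_pow 2 v).const_add 1
  have h2 : HasDerivAt (fun x : ℝ => Real.sqrt (1 + x ^ 2))
      (1 / (2 * Real.sqrt (1 + v ^ 2)) * (2 * v ^ 1)) v :=
    (Real.hasDerivAt_sqrt (ne_of_gt hpos)).comp v h1
  have h3 := (hasDerivAt_id v).div h2 (ne_of_gt hqpos)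
  refine h3.congr_deriv ?_
  have hq2 : Real.sqrt (1 + v ^ 2) ^ 2 = 1 + v ^ 2 := Real.sq_sqrt hpos.le
  set q := Real.sqrt (1 + v ^ 2) with hqdef
  field_simp
  have h4 : q * (2 * q) - v * (2 * v) = 2 := by nlinarith [hq2]
  simp only [id]; linarith [hq2]

/-- for κ < 0 and a pendent solution with u(0) = u₀ < 0,
u'(0) = 0, at every r ∈ (0, R] where u has been negative on [0, r] one has
κ u(r) < (sin ψ(r))/r < κ u₀, with sin ψ(r) = u'(r)/√(1 + u'(r)²);
in particular sin ψ(r) < κ u₀ r. -/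
theorem stmt_18 (κ R u₀ : ℝ) (hκ : κ < 0) (hR : 0 < R) (u : ℝ → ℝ)
    (hu : Differentiable ℝ u) (hu' : Differentiable ℝ (deriv u))
    (hode : ∀ r ∈ Set.Icc (0 : ℝ) R,
      deriv (deriv u) r = κ * u r * (1 + (deriv u r) ^ 2) ^ ((3 : ℝ) / 2))
    (hu0 : u 0 = u₀) (hu₀neg : u₀ < 0) (hdu0 : deriv u 0 = 0) :
    ∀ r ∈ Set.Ioc (0 : ℝ) R, (∀ t ∈ Set.Icc (0 : ℝ) r, u t < 0) →
      κ * u r < (deriv u r / Real.sqrt (1 + (deriv u r) ^ 2)) / r ∧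
      (deriv u r / Real.sqrt (1 + (deriv u r) ^ 2)) / r < κ * u₀ ∧
      deriv u r / Real.sqrt (1 + (deriv u r) ^ 2) < κ * u₀ * r := by
  intro r hr hneg
  obtain ⟨hr0, hrR⟩ := hr
  set s : ℝ → ℝ := fun t => deriv u t / Real.sqrt (1 + (deriv u t) ^ 2) with hs
  have hsub : ∀ t ∈ Set.Icc (0:ℝ) r, t ∈ Set.Icc (0:ℝ) R :=
    fun t ht => ⟨ht.1, ht.2.trans hrR⟩
  -- derivative of s
  have hsd : ∀ t : ℝ, HasDerivAt s
      (((Real.sqrt (1 + (deriv u t) ^ 2)) ^ 3)⁻¹ * deriv (deriv u) t) t := by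
    intro t
    exact (aux_hasDerivAt (deriv u t)).comp t (hu' t).hasDerivAt
  have hsdiff : Differentiable ℝ s := fun t => (hsd t).differentiableAt
  have hds : ∀ t ∈ Set.Icc (0:ℝ) R, deriv s t = κ * u t := by
    intro t ht
    rw [(hsd t).deriv, hode t ht]
    have hpos : (0:ℝ) < 1 + (deriv u t) ^ 2 := by positivity
    have hq : (Real.sqrt (1 + (deriv u t) ^ 2)) ^ 3
        = (1 + (deriv u t) ^ 2) ^ ((3:ℝ)/2) := by
      rw [Real.sqrt_eq_rpow, ← Real.rpow_natCast _ 3, ← Real.rpow_mul hpos.le]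
      norm_num
    have hne : (1 + (deriv u t) ^ 2) ^ ((3:ℝ)/2) ≠ 0 := by positivity
    rw [hq]
    field_simp
  have hs0 : s 0 = 0 := by simp [hs, hdu0]
  -- s is strictly increasing on [0, r]
  have hsmono : StrictMonoOn s (Set.Icc 0 r) := by
    apply strictMonoOn_of_deriv_pos (convex_Icc 0 r) hsdiff.continuous.continuousOn
    intro t ht
    rw [interior_Icc] at ht
    have ht' : t ∈ Set.Icc (0:ℝ) r := ⟨ht.1.le, ht.2.le⟩
    rw [hds t (hsub t ht')]
    exact mul_pos_of_neg_of_neg hκ (hneg t ht')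
  -- u' > 0 on (0, r]
  have hdu_pos : ∀ t ∈ Set.Ioc (0:ℝ) r, 0 < deriv u t := by
    intro t ht
    have h1 : s 0 < s t := hsmono ⟨le_refl 0, hr0.le⟩ ⟨ht.1.le, ht.2⟩ ht.1
    rw [hs0] at h1
    have hqpos : 0 < Real.sqrt (1 + (deriv u t) ^ 2) :=
      Real.sqrt_pos.mpr (by positivity)
    simp only [hs] at h1
    rcases div_pos_iff.mp h1 with ⟨h, _⟩ | ⟨_, h⟩
    · exact h
    · exact absurd h (not_lt.mpr hqpos.le)
  -- u is strictly increasing on [0, r]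
  have humono : StrictMonoOn u (Set.Icc 0 r) := by
    apply strictMonoOn_of_deriv_pos (convex_Icc 0 r) hu.continuous.continuousOn
    intro t ht
    rw [interior_Icc] at ht
    exact hdu_pos t ⟨ht.1, ht.2.le⟩
  -- first inequality: κ u(r) r < s(r)
  have key1 : κ * u r * r < s r := by
    set g : ℝ → ℝ := fun t => s t - κ * u r * t with hg
    have hgd : ∀ t : ℝ, HasDerivAt g (deriv s t - κ * u r) t := by
      intro t
      have := ((hsdiff t).hasDerivAt).sub ((hasDerivAt_id t).const_mul (κ * u r))
      exact this.congr_deriv (by simp)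
    have hgmono : StrictMonoOn g (Set.Icc 0 r) := by
      apply strictMonoOn_of_deriv_pos (convex_Icc 0 r)
        ((Differentiable.continuous (fun t => (hgd t).differentiableAt)).continuousOn)
      intro t ht
      rw [interior_Icc] at ht
      have ht' : t ∈ Set.Icc (0:ℝ) r := ⟨ht.1.le, ht.2.le⟩
      rw [(hgd t).deriv, hds t (hsub t ht')]
      have hur : u t < u r := humono ht' ⟨hr0.le, le_refl r⟩ ht.2
      nlinarith
    have h2 : g 0 < g r := hgmono ⟨le_refl 0, hr0.le⟩ ⟨hr0.le, le_refl r⟩ hr0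
    simp only [hg, hs0] at h2
    simp at h2
    linarith
  -- second inequality: s(r) < κ u₀ r
  have key2 : s r < κ * u₀ * r := by
    set g : ℝ → ℝ := fun t => κ * u₀ * t - s t with hg
    have hgd : ∀ t : ℝ, HasDerivAt g (κ * u₀ - deriv s t) t := by
      intro t
      have := ((hasDerivAt_id t).const_mul (κ * u₀)).sub ((hsdiff t).hasDerivAt)
      exact this.congr_deriv (by simp)
    have hgmono : StrictMonoOn g (Set.Icc 0 r) := by
      apply strictMonoOn_of_deriv_pos (convex_Icc 0 r)
        ((Differentiable.continuous (fun t => (hgd t).differentiableAt)).continuousOn)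
      intro t ht
      rw [interior_Icc] at ht
      have ht' : t ∈ Set.Icc (0:ℝ) r := ⟨ht.1.le, ht.2.le⟩
      rw [(hgd t).deriv, hds t (hsub t ht')]
      have hut : u 0 < u t := humono ⟨le_refl 0, hr0.le⟩ ht' ht.1
      rw [hu0] at hut
      nlinarith
    have h2 : g 0 < g r := hgmono ⟨le_refl 0, hr0.le⟩ ⟨hr0.le, le_refl r⟩ hr0
    simp only [hg, hs0] at h2
    simp at h2
    linarith
  refine ⟨(lt_div_iff₀ hr0).mpr key1, (div_lt_iff₀ hr0).mpr key2, key2⟩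
end

section
/- (Location of the first zero of a pendent channel) Let κ < 0 and let u be a solution of the capillary equation on [0, R] with u(0) = u₀, u'(0) = 0, where −√(−2/κ) < u₀ < 0. Assume R > 0 is the first zero of u, i.e. u(R) = 0 and u(r) < 0 for all r ∈ [0, R). Then 1/√(−2κ) < R < √(−2e/κ), where e is Euler's number. -/
set_option maxHeartbeats 1000000

open Real Set

/-- Location of the first zero of a pendent channel: for κ < 0
and −√(−2/κ) < u₀ < 0, if R is the first zero of u then
1/√(−2κ) < R < √(−2e/κ). -/
theorem stmt_19 (κ R u₀ : ℝ) (hκ : κ < 0) (hR : 0 < R) (u : ℝ → ℝ)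
    (hu : Differentiable ℝ u) (hu' : Differentiable ℝ (deriv u))
    (hode : ∀ r ∈ Set.Icc (0 : ℝ) R,
      deriv (deriv u) r = κ * u r * (1 + (deriv u r) ^ 2) ^ ((3 : ℝ) / 2))
    (hu0 : u 0 = u₀) (hdu0 : deriv u 0 = 0)
    (hu₀l : -Real.sqrt (-2 / κ) < u₀) (hu₀u : u₀ < 0)
    (hzero : u R = 0) (hneg : ∀ r ∈ Set.Ico (0 : ℝ) R, u r < 0) :
    1 / Real.sqrt (-2 * κ) < R ∧
    R < Real.sqrt (-2 * Real.exp 1 / κ) := by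
  set p := deriv u with hp_def
  have hκ' : (0:ℝ) < -κ := by linarith
  have hq : ∀ r : ℝ, (0:ℝ) < 1 + p r ^ 2 := fun r => by positivity
  have hsqpos : ∀ r : ℝ, 0 < Real.sqrt (1 + p r ^ 2) := fun r => Real.sqrt_pos.mpr (hq r)
  have hsq : ∀ r : ℝ, Real.sqrt (1 + p r ^ 2) ≠ 0 := fun r => (hsqpos r).ne'
  have hpc : Continuous p := hu'.continuous
  have huc : Continuous u := hu.continuous
  have hIcc : Convex ℝ (Icc (0:ℝ) R) := convex_Icc _ _
  have h0mem : (0:ℝ) ∈ Icc (0:ℝ) R := ⟨le_refl 0, hR.le⟩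
  have hRmem : R ∈ Icc (0:ℝ) R := ⟨hR.le, le_refl R⟩
  -- rpow expansion
  have hq32 : ∀ r : ℝ, (1 + p r ^ 2) ^ ((3:ℝ)/2)
      = (1 + p r ^ 2) * Real.sqrt (1 + p r ^ 2) := by
    intro r
    rw [show (3:ℝ)/2 = 1 + 1/2 by norm_num, Real.rpow_add (hq r), Real.rpow_one,
      ← Real.sqrt_eq_rpow]
  have hp'eq : ∀ r ∈ Icc (0:ℝ) R,
      deriv p r = κ * u r * ((1 + p r ^ 2) * Real.sqrt (1 + p r ^ 2)) := by
    intro r hr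
    rw [← hq32 r]
    exact hode r hr
  -- derivative of 1 + p^2
  have hqd : ∀ r : ℝ, HasDerivAt (fun x => 1 + p x ^ 2) (2 * p r * deriv p r) r := by
    intro r
    have := ((hu' r).hasDerivAt.pow 2).const_add (1:ℝ)
    simpa using this
  -- derivative of c = (sqrt (1+p^2))⁻¹
  have hcd : ∀ r : ℝ, HasDerivAt (fun x => (Real.sqrt (1 + p x ^ 2))⁻¹)
      (-(p r * deriv p r) / ((1 + p r ^ 2) * Real.sqrt (1 + p r ^ 2))) r := by
    intro r
    have h1 : HasDerivAt (fun x => Real.sqrt (1 + p x ^ 2))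
        (1 / (2 * Real.sqrt (1 + p r ^ 2)) * (2 * p r * deriv p r)) r :=
      (Real.hasDerivAt_sqrt (hq r).ne').comp r (hqd r)
    have h2 := h1.inv (hsq r)
    refine h2.congr_deriv ?_
    rw [Real.sq_sqrt (hq r).le]
    field_simp
  have hcdI : ∀ r ∈ Icc (0:ℝ) R, HasDerivAt (fun x => (Real.sqrt (1 + p x ^ 2))⁻¹)
      (-(κ * u r * p r)) r := by
    intro r hr
    have h := hcd r
    rw [hp'eq r hr] at h
    convert h using 1
    field_simp
  -- derivative of s = p * c  (the sine of the inclination angle)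
  have hsdI : ∀ r ∈ Icc (0:ℝ) R,
      HasDerivAt (fun x => p x * (Real.sqrt (1 + p x ^ 2))⁻¹) (κ * u r) r := by
    intro r hr
    have h := ((hu' r).hasDerivAt).mul (hcd r)
    rw [hp'eq r hr] at h
    refine h.congr_deriv ?_
    field_simp
    ring
  have hcc : Continuous fun x => (Real.sqrt (1 + p x ^ 2))⁻¹ :=
    ((continuous_const.add (hpc.pow 2)).sqrt).inv₀ hsq
  -- energy conservation
  have hgdI : ∀ r ∈ Icc (0:ℝ) R,
      HasDerivAt (fun x => (Real.sqrt (1 + p x ^ 2))⁻¹ + κ/2 * u x ^ 2) 0 r := by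
    intro r hr
    have h := (hcdI r hr).add (((hu r).hasDerivAt.pow 2).const_mul (κ/2))
    refine h.congr_deriv ?_
    simp
    ring
  have hgc : ContinuousOn (fun x => (Real.sqrt (1 + p x ^ 2))⁻¹ + κ/2 * u x ^ 2)
      (Icc (0:ℝ) R) :=
    (hcc.add (continuous_const.mul (huc.pow 2))).continuousOn
  have hgdiff : DifferentiableOn ℝ (fun x => (Real.sqrt (1 + p x ^ 2))⁻¹ + κ/2 * u x ^ 2)
      (interior (Icc (0:ℝ) R)) := fun x hx =>
    ((hgdI x (interior_subset hx)).differentiableAt).differentiableWithinAt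
  have hgconst : ∀ r ∈ Icc (0:ℝ) R,
      (Real.sqrt (1 + p r ^ 2))⁻¹ + κ/2 * u r ^ 2 = 1 + κ/2 * u₀ ^ 2 := by
    have hmono := monotoneOn_of_deriv_nonneg hIcc hgc hgdiff
      (fun x hx => le_of_eq ((hgdI x (interior_subset hx)).deriv).symm)
    have hanti := antitoneOn_of_deriv_nonpos hIcc hgc hgdiff
      (fun x hx => le_of_eq ((hgdI x (interior_subset hx)).deriv))
    intro r hr
    have h1 := hmono h0mem hr hr.1
    have h2 := hanti h0mem hr hr.1
    have h0 : (Real.sqrt (1 + p 0 ^ 2))⁻¹ + κ/2 * u 0 ^ 2 = 1 + κ/2 * u₀ ^ 2 := by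
      rw [hu0, show p 0 = 0 from hdu0]
      norm_num
    simp only at h1 h2
    rw [h0] at h1 h2
    linarith
  -- p is positive on (0, R]
  have hppos : ∀ r ∈ Ioc (0:ℝ) R, 0 < p r := by
    have hpmono : StrictMonoOn p (Icc (0:ℝ) R) := by
      apply strictMonoOn_of_deriv_pos hIcc hpc.continuousOn
      intro x hx
      rw [interior_Icc] at hx
      rw [hp'eq x ⟨hx.1.le, hx.2.le⟩]
      have hux : u x < 0 := hneg x ⟨hx.1.le, hx.2⟩
      have h1 : 0 < κ * u x := mul_pos_of_neg_of_neg hκ hux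
      have h2 : 0 < (1 + p x ^ 2) * Real.sqrt (1 + p x ^ 2) :=
        mul_pos (hq x) (hsqpos x)
      exact mul_pos h1 h2
    intro r hr
    have := hpmono h0mem ⟨hr.1.le, hr.2⟩ hr.1
    rwa [show p 0 = 0 from hdu0] at this
  have hpnn : ∀ r ∈ Icc (0:ℝ) R, 0 ≤ p r := by
    intro r hr
    rcases eq_or_lt_of_le hr.1 with h | h
    · rw [← h, show p 0 = 0 from hdu0]
    · exact (hppos r ⟨h, hr.2⟩).le
  -- u is increasing
  have humono : StrictMonoOn u (Icc (0:ℝ) R) := by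
    apply strictMonoOn_of_deriv_pos hIcc huc.continuousOn
    intro x hx
    rw [interior_Icc] at hx
    exact hppos x ⟨hx.1, hx.2.le⟩
  have hu_lb : ∀ r ∈ Icc (0:ℝ) R, u₀ ≤ u r := by
    intro r hr
    rcases eq_or_lt_of_le hr.1 with h | h
    · rw [← h, hu0]
    · have := humono h0mem hr h
      rw [hu0] at this
      exact this.le
  have hu_ub : ∀ r ∈ Icc (0:ℝ) R, u r ≤ 0 := by
    intro r hr
    rcases eq_or_lt_of_le hr.2 with h | h
    · rw [h, hzero]
    · exact (hneg r ⟨hr.1, h⟩).le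
  have hu_gt : ∀ r ∈ Ioo (0:ℝ) R, u₀ < u r := by
    intro r hr
    have := humono h0mem ⟨hr.1.le, hr.2.le⟩ hr.1
    rwa [hu0] at this
  -- bounds on B := -(κ u₀²)/2
  have hu₀2 : 0 < u₀ ^ 2 := by nlinarith
  have hB0 : 0 < -(κ * u₀ ^ 2) / 2 := by nlinarith
  have hB1 : -(κ * u₀ ^ 2) / 2 < 1 := by
    have h1 : -u₀ < Real.sqrt (-2 / κ) := by linarith
    have h2 : (-u₀) ^ 2 < Real.sqrt (-2/κ) ^ 2 :=
      pow_lt_pow_left₀ h1 (by linarith) (by norm_num)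
    have hm2κ : (0:ℝ) < -2/κ := div_pos_of_neg_of_neg (by norm_num) hκ
    rw [Real.sq_sqrt hm2κ.le] at h2
    have h3 : u₀ ^ 2 < -2/κ := by nlinarith
    have h4 : (-κ) * u₀ ^ 2 < (-κ) * (-2/κ) := mul_lt_mul_of_pos_left h3 hκ'
    have h5 : (-κ) * (-2/κ) = 2 := by field_simp [hκ.ne]
    nlinarith
  have hκu₀ : 0 < κ * u₀ := mul_pos_of_neg_of_neg hκ hu₀u
  -- energy at R
  have hcR : (Real.sqrt (1 + p R ^ 2))⁻¹ = 1 + κ/2 * u₀ ^ 2 := by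
    have := hgconst R hRmem
    rw [hzero] at this
    linarith [this]
  -- s² + c² = 1
  have hsc : ∀ r : ℝ, (p r * (Real.sqrt (1 + p r ^ 2))⁻¹) ^ 2
      = 1 - ((Real.sqrt (1 + p r ^ 2))⁻¹) ^ 2 := by
    intro r
    have h1 : (Real.sqrt (1 + p r ^ 2)) ^ 2 = 1 + p r ^ 2 := Real.sq_sqrt (hq r).le
    field_simp
    linarith [h1]
  ------------------------------------------------------------------
  -- LOWER BOUND
  ------------------------------------------------------------------
  have lower : 1 / Real.sqrt (-2 * κ) < R := by
    -- F r = κ u₀ r - s r is monotone on [0,R]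
    have hFd : ∀ r ∈ Icc (0:ℝ) R,
        HasDerivAt (fun x => κ * u₀ * x - p x * (Real.sqrt (1 + p x ^ 2))⁻¹)
          (κ * u₀ - κ * u r) r := by
      intro r hr
      have h1 : HasDerivAt (fun x : ℝ => κ * u₀ * x) (κ * u₀) r := by
        simpa using (hasDerivAt_id r).const_mul (κ * u₀)
      exact h1.sub (hsdI r hr)
    have hFc : ContinuousOn (fun x => κ * u₀ * x - p x * (Real.sqrt (1 + p x ^ 2))⁻¹)
        (Icc (0:ℝ) R) :=
      ((continuous_const.mul continuous_id).sub (hpc.mul hcc)).continuousOn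
    have hFmono : MonotoneOn (fun x => κ * u₀ * x - p x * (Real.sqrt (1 + p x ^ 2))⁻¹)
        (Icc (0:ℝ) R) := by
      apply monotoneOn_of_deriv_nonneg hIcc hFc
      · intro x hx
        exact ((hFd x (interior_subset hx)).differentiableAt).differentiableWithinAt
      · intro x hx
        rw [interior_Icc] at hx
        rw [(hFd x ⟨hx.1.le, hx.2.le⟩).deriv]
        have h1 := hu_lb x ⟨hx.1.le, hx.2.le⟩
        nlinarith
    have hF := hFmono h0mem hRmem hR.le
    simp only [show p 0 = 0 from hdu0] at hF
    norm_num at hF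
    -- hF : p R * (√(1+p R²))⁻¹ ≤ κ u₀ R  (roughly)
    have hsR2 : (p R * (Real.sqrt (1 + p R ^ 2))⁻¹) ^ 2
        = 1 - (1 + κ/2 * u₀ ^ 2) ^ 2 := by rw [hsc R, hcR]
    have hsRpos : 0 < p R * (Real.sqrt (1 + p R ^ 2))⁻¹ :=
      mul_pos (hppos R ⟨hR, le_refl R⟩) (inv_pos.mpr (hsqpos R))
    have hsRgt : Real.sqrt (-(κ * u₀ ^ 2) / 2) < p R * (Real.sqrt (1 + p R ^ 2))⁻¹ := by
      rw [Real.sqrt_lt' hsRpos]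
      have e1 : (p R * (Real.sqrt (1 + p R ^ 2))⁻¹) ^ 2
          = -(κ * u₀ ^ 2) - (κ/2 * u₀ ^ 2) ^ 2 := by rw [hsR2]; ring
      rw [e1]
      nlinarith [mul_pos hB0 (by linarith : (0:ℝ) < 1 - -(κ * u₀ ^ 2) / 2)]
    have key : Real.sqrt (-(κ * u₀ ^ 2) / 2) * Real.sqrt (-2 * κ) = κ * u₀ := by
      rw [← Real.sqrt_mul hB0.le]
      rw [show -(κ * u₀ ^ 2) / 2 * (-2 * κ) = (κ * u₀) ^ 2 by ring]
      exact Real.sqrt_sq hκu₀.le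
    have h2κ : (0:ℝ) < Real.sqrt (-2 * κ) := Real.sqrt_pos.mpr (by linarith)
    rw [div_lt_iff₀ h2κ]
    -- 1 < R * √(-2κ)
    have h6 : Real.sqrt (-(κ * u₀ ^ 2) / 2) < κ * u₀ * R := lt_of_lt_of_le hsRgt (by linarith)
    have h7 : Real.sqrt (-(κ * u₀ ^ 2) / 2) * Real.sqrt (-2 * κ)
        < (κ * u₀ * R) * Real.sqrt (-2 * κ) := by
      exact mul_lt_mul_of_pos_right h6 h2κ
    rw [key] at h7
    have h8 : κ * u₀ * 1 < κ * u₀ * (R * Real.sqrt (-2 * κ)) := by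
      rw [mul_one]
      calc κ * u₀ < κ * u₀ * R * Real.sqrt (-2 * κ) := h7
        _ = κ * u₀ * (R * Real.sqrt (-2 * κ)) := by ring
    exact lt_of_mul_lt_mul_left (by linarith [h8]) hκu₀.le
  ------------------------------------------------------------------
  -- UPPER BOUND
  ------------------------------------------------------------------
  have hm : (0:ℝ) < -u₀ := by linarith
  -- pointwise lower bound on p
  have hkey : ∀ r ∈ Ioo (0:ℝ) R,
      Real.sqrt (-κ/2) * Real.sqrt (u₀ ^ 2 - u r ^ 2) ≤ p r := by
    intro r hr
    have hrI : r ∈ Icc (0:ℝ) R := ⟨hr.1.le, hr.2.le⟩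
    have hub := hu_ub r hrI
    have hlb := hu_lb r hrI
    have hu2 : u r ^ 2 ≤ u₀ ^ 2 := by nlinarith
    have hA0 : 0 ≤ -κ/2 * (u₀ ^ 2 - u r ^ 2) := by nlinarith
    have hcr := hgconst r hrI
    -- c r = 1 - A where A = -κ/2 (u₀² - u²)
    have hcval : (Real.sqrt (1 + p r ^ 2))⁻¹ = 1 - (-κ/2 * (u₀ ^ 2 - u r ^ 2)) := by
      linarith [hcr]
    have hs2 : (p r * (Real.sqrt (1 + p r ^ 2))⁻¹) ^ 2
        = 1 - (1 - (-κ/2 * (u₀ ^ 2 - u r ^ 2))) ^ 2 := by rw [hsc r, hcval]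
    have hsnn : 0 ≤ p r * (Real.sqrt (1 + p r ^ 2))⁻¹ :=
      mul_nonneg (hpnn r hrI) (inv_nonneg.mpr (Real.sqrt_nonneg _))
    have hA1 : -κ/2 * (u₀ ^ 2 - u r ^ 2) ≤ -(κ * u₀ ^ 2) / 2 := by nlinarith [sq_nonneg (u r)]
    have h1 : -κ/2 * (u₀ ^ 2 - u r ^ 2) ≤ (p r * (Real.sqrt (1 + p r ^ 2))⁻¹) ^ 2 := by
      have e1 : (p r * (Real.sqrt (1 + p r ^ 2))⁻¹) ^ 2
          = 2 * (-κ/2 * (u₀ ^ 2 - u r ^ 2)) - (-κ/2 * (u₀ ^ 2 - u r ^ 2)) ^ 2 := by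
        rw [hs2]; ring
      rw [e1]
      nlinarith [mul_nonneg hA0 (by linarith : (0:ℝ) ≤ 1 - -κ/2 * (u₀ ^ 2 - u r ^ 2))]
    have h2 : Real.sqrt (-κ/2 * (u₀ ^ 2 - u r ^ 2)) ≤ p r * (Real.sqrt (1 + p r ^ 2))⁻¹ := by
      have h2' := Real.sqrt_le_sqrt h1
      rwa [Real.sqrt_sq hsnn] at h2'
    have h3 : p r * (Real.sqrt (1 + p r ^ 2))⁻¹ ≤ p r := by
      have hsq1 : 1 ≤ Real.sqrt (1 + p r ^ 2) := by
        have := Real.sqrt_le_sqrt (show (1:ℝ) ≤ 1 + p r ^ 2 by nlinarith)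
        rwa [Real.sqrt_one] at this
      calc p r * (Real.sqrt (1 + p r ^ 2))⁻¹ ≤ p r * 1 :=
            mul_le_mul_of_nonneg_left (inv_le_one_of_one_le₀ hsq1) (hpnn r hrI)
        _ = p r := mul_one _
    calc Real.sqrt (-κ/2) * Real.sqrt (u₀ ^ 2 - u r ^ 2)
        = Real.sqrt (-κ/2 * (u₀ ^ 2 - u r ^ 2)) := (Real.sqrt_mul (by linarith) _).symm
      _ ≤ p r * (Real.sqrt (1 + p r ^ 2))⁻¹ := h2
      _ ≤ p r := h3
  -- derivative of θ = arcsin (u / (-u₀))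
  have hθd : ∀ r ∈ Ioo (0:ℝ) R, HasDerivAt (fun x => Real.arcsin (u x / (-u₀)))
      (1 / Real.sqrt (1 - (u r / (-u₀)) ^ 2) * (p r / (-u₀))) r := by
    intro r hr
    have hgt : u₀ < u r := hu_gt r hr
    have hlt : u r < 0 := hneg r ⟨hr.1.le, hr.2⟩
    have hx1 : u r / (-u₀) ≠ -1 := by
      have : -1 < u r / (-u₀) := by
        rw [lt_div_iff₀ hm]
        linarith
      linarith
    have hx2 : u r / (-u₀) ≠ 1 := by
      have : u r / (-u₀) < 0 := div_neg_of_neg_of_pos hlt hm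
      linarith
    exact (Real.hasDerivAt_arcsin hx1 hx2).comp r ((hu r).hasDerivAt.div_const (-u₀))
  -- θ' ≥ √(-κ/2) on (0,R)
  have hθ' : ∀ r ∈ Ioo (0:ℝ) R,
      Real.sqrt (-κ/2) ≤ 1 / Real.sqrt (1 - (u r / (-u₀)) ^ 2) * (p r / (-u₀)) := by
    intro r hr
    have hgt : u₀ < u r := hu_gt r hr
    have hlt : u r < 0 := hneg r ⟨hr.1.le, hr.2⟩
    have hd : 0 < u₀ ^ 2 - u r ^ 2 := by nlinarith
    have hdpos : 0 < Real.sqrt (u₀ ^ 2 - u r ^ 2) := Real.sqrt_pos.mpr hd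
    have hexp : 1 - (u r / (-u₀)) ^ 2 = (u₀ ^ 2 - u r ^ 2) / u₀ ^ 2 := by
      field_simp
      rw [sub_div, div_self hu₀2.ne']
    have hsqu₀ : Real.sqrt (u₀ ^ 2) = -u₀ := by
      rw [show u₀ ^ 2 = (-u₀) ^ 2 by ring]
      exact Real.sqrt_sq hm.le
    have heq : 1 / Real.sqrt (1 - (u r / (-u₀)) ^ 2) * (p r / (-u₀))
        = p r / Real.sqrt (u₀ ^ 2 - u r ^ 2) := by
      rw [hexp, Real.sqrt_div hd.le, hsqu₀]
      field_simp [hdpos.ne', hu₀u.ne]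
    rw [heq, le_div_iff₀ hdpos]
    exact hkey r hr
  -- G r = arcsin(u r / (-u₀)) - √(-κ/2) r is monotone on [0,R]
  have hGmono : MonotoneOn (fun x => Real.arcsin (u x / (-u₀)) - Real.sqrt (-κ/2) * x)
      (Icc (0:ℝ) R) := by
    apply monotoneOn_of_deriv_nonneg hIcc
    · exact ((Real.continuous_arcsin.comp (huc.div_const _)).sub
        (continuous_const.mul continuous_id)).continuousOn
    · intro x hx
      rw [interior_Icc] at hx
      have h1 : HasDerivAt (fun x : ℝ => Real.sqrt (-κ/2) * x) (Real.sqrt (-κ/2)) x := by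
        simpa using (hasDerivAt_id x).const_mul (Real.sqrt (-κ/2))
      exact (((hθd x hx).sub h1).differentiableAt).differentiableWithinAt
    · intro x hx
      rw [interior_Icc] at hx
      have h1 : HasDerivAt (fun x : ℝ => Real.sqrt (-κ/2) * x) (Real.sqrt (-κ/2)) x := by
        simpa using (hasDerivAt_id x).const_mul (Real.sqrt (-κ/2))
      have hd2 : HasDerivAt (fun x => Real.arcsin (u x / (-u₀)) - Real.sqrt (-κ/2) * x) _ x :=
        (hθd x hx).sub h1
      rw [hd2.deriv]
      have := hθ' x hx
      linarith
  have hG := hGmono h0mem hRmem hR.le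
  simp only [hu0, hzero] at hG
  rw [show u₀ / (-u₀) = -1 by rw [div_neg, div_self hu₀u.ne], show (0:ℝ) / (-u₀) = 0 by simp,
    Real.arcsin_neg_one, Real.arcsin_zero] at hG
  -- hG : -(π/2) - √(-κ/2) * 0 ≤ 0 - √(-κ/2) * R
  have hfin : Real.sqrt (-κ/2) * R ≤ π / 2 := by
    have h0 : Real.sqrt (-κ/2) * 0 = 0 := by ring
    linarith [hG]
  have upper : R < Real.sqrt (-2 * Real.exp 1 / κ) := by
    have hhalf : (0:ℝ) < Real.sqrt (-κ/2) := Real.sqrt_pos.mpr (by linarith)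
    have hmul : Real.sqrt (-κ/2) * Real.sqrt (-2 * Real.exp 1 / κ)
        = Real.sqrt (Real.exp 1) := by
      rw [← Real.sqrt_mul (by linarith : (0:ℝ) ≤ -κ/2)]
      congr 1
      field_simp [hκ.ne]
    have hπe : π / 2 < Real.sqrt (Real.exp 1) := by
      rw [Real.lt_sqrt (by positivity)]
      nlinarith [Real.pi_lt_d2, Real.exp_one_gt_d9, Real.pi_pos]
    have h2 : Real.sqrt (-κ/2) * R < Real.sqrt (-κ/2) * Real.sqrt (-2 * Real.exp 1 / κ) := by
      rw [hmul]
      linarith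
    exact lt_of_mul_lt_mul_left h2 hhalf.le
  exact ⟨lower, upper⟩
end
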